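/- For a standard Young tableau m with n boxes and any i with 1 ≤ i ≤ n−1, swapping the entries i and i+1 in m yields a standard Young tableau if and only if the axial distance d_i(m) satisfies |d_i(m)| ≠ 1. -/
import Mathlib


open Finset
open scoped Classical

/-- A filling `pos : Fin n → ℕ × ℕ` (the cell, as `(row, column)`, containing entry `k+1`)
is a standard Young tableau iff it is injective and every prefix of cells forms a
Young diagram. -/
def IsSYTFun (n : ℕ) (pos : Fin n → ℕ × ℕ) : Prop :=
  Function.Injective pos ∧
    ∀ k : Fin n, ∃ Y : YoungDiagram,
      Y.cells = (Finset.univ.filter (fun j => j ≤ k)).image pos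

/-- A standard Young tableau with `n` boxes. -/
structure SYT (n : ℕ) where
  pos : Fin n → ℕ × ℕ
  isSYT : IsSYTFun n pos

/-- The content (column minus row) of a cell. -/
def cellContent (p : ℕ × ℕ) : ℤ := (p.2 : ℤ) - (p.1 : ℤ)

/-- The axial distance `d_i(m)` between the entries `i` and `i+1` of `m`
(content of the cell of `i+1` minus content of the cell of `i`); `0` when `i`
is out of range. -/
def SYT.d {n : ℕ} (m : SYT n) (i : ℕ) : ℤ :=
  if h : 0 < i ∧ i < n then
    cellContent (m.pos ⟨i, h.2⟩) -
      cellContent (m.pos ⟨i - 1, Nat.lt_of_le_of_lt (Nat.sub_le i 1) h.2⟩)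
  else 0

/-- The shape of a standard Young tableau, as a finite set of cells. -/
def SYT.shape {n : ℕ} (m : SYT n) : Finset (ℕ × ℕ) := Finset.univ.image m.pos

/-- `g_i(m)`: the tableau obtained from `m` by exchanging the entries `i` and `i+1`,
if this again yields a standard Young tableau, and `m` otherwise. -/
noncomputable def SYT.g {n : ℕ} (m : SYT n) (i : ℕ) : SYT n :=
  if h : ∃ h' : 0 < i ∧ i < n,
      IsSYTFun n (m.pos ∘ Equiv.swap
        (⟨i - 1, Nat.lt_of_le_of_lt (Nat.sub_le i 1) h'.2⟩ : Fin n) ⟨i, h'.2⟩) then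
    ⟨_, h.choose_spec⟩
  else m

/-- `(m, m')` is a crossing pair: for some `i` the axial distances differ and the
swaps `g_i` act on both tableaux either both nontrivially or both trivially. -/
def Crossing {n : ℕ} (m m' : SYT n) : Prop :=
  ∃ i : ℕ, 0 < i ∧ i < n ∧ m.d i ≠ m'.d i ∧
    ((|m.d i| ≠ 1 ∧ |m'.d i| ≠ 1) ∨ (|m.d i| = 1 ∧ |m'.d i| = 1))

/-- Key combinatorial lemma about lower sets. -/
lemma key_lower (A : Finset (ℕ × ℕ)) (P Q : ℕ × ℕ)
    (hA0 : IsLowerSet (↑A : Set (ℕ × ℕ)))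
    (hA : IsLowerSet (↑(insert P A) : Set (ℕ × ℕ)))
    (hB : IsLowerSet (↑(insert Q (insert P A)) : Set (ℕ × ℕ)))
    (hPA : P ∉ A) (hQB : Q ∉ insert P A) :
    IsLowerSet (↑(insert Q A) : Set (ℕ × ℕ)) ↔ |cellContent Q - cellContent P| ≠ 1 := by
  have hQP : ¬ Q ≤ P := fun h =>
    hQB (by exact_mod_cast hA h (by simp : P ∈ (↑(insert P A) : Set (ℕ × ℕ))))
  have hPne : P ≠ Q := fun h => hQP (le_of_eq h.symm)
  have step1 : IsLowerSet (↑(insert Q A) : Set (ℕ × ℕ)) ↔ ¬ P ≤ Q := by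
    constructor
    · intro hT hPQ
      have hP : P ∈ (↑(insert Q A) : Set (ℕ × ℕ)) :=
        hT hPQ (by simp : Q ∈ (↑(insert Q A) : Set (ℕ × ℕ)))
      simp only [Finset.coe_insert, Set.mem_insert_iff, Finset.mem_coe] at hP
      rcases hP with h | h
      · exact hQP (le_of_eq h.symm)
      · exact hPA h
    · intro hPQ x y hyx hx
      simp only [Finset.coe_insert, Set.mem_insert_iff, Finset.mem_coe] at hx ⊢
      rcases hx with rfl | hx
      · have hy : y ∈ (↑(insert x (insert P A)) : Set (ℕ × ℕ)) :=
          hB hyx (by simp : x ∈ (↑(insert x (insert P A)) : Set (ℕ × ℕ)))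
        simp only [Finset.coe_insert, Set.mem_insert_iff, Finset.mem_coe] at hy
        rcases hy with rfl | rfl | hy
        · exact Or.inl rfl
        · exact absurd hyx hPQ
        · exact Or.inr hy
      · exact Or.inr (hA0 hyx hx)
  rw [step1]
  constructor
  · -- incomparable ⟹ |d| ≥ 2
    intro hPQ habs
    rw [Prod.le_def, not_and_or] at hPQ hQP
    rcases (abs_eq (by norm_num : (0:ℤ) ≤ 1)).mp habs with h | h <;>
      simp only [cellContent] at h <;>
      rcases hPQ with h1 | h1 <;> rcases hQP with h2 | h2 <;> omega
  · -- |d| = 1 ⟹ P ≤ Q  (contrapositive)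
    intro hd hPQ
    apply hd
    rw [abs_eq (by norm_num : (0:ℤ) ≤ 1)]
    by_cases hc : P.2 < Q.2
    · have hle : (Q.1, Q.2 - 1) ≤ Q := by
        rw [Prod.le_def]; exact ⟨le_refl _, Nat.sub_le _ _⟩
      have hq : (Q.1, Q.2 - 1) ∈ (↑(insert Q (insert P A)) : Set (ℕ × ℕ)) :=
        hB hle (by simp : Q ∈ (↑(insert Q (insert P A)) : Set (ℕ × ℕ)))
      simp only [Finset.coe_insert, Set.mem_insert_iff, Finset.mem_coe] at hq
      rcases hq with h | h | h
      · exfalso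
        have := congrArg Prod.snd h
        simp at this; omega
      · -- (Q.1, Q.2-1) = P
        have h1 := congrArg Prod.fst h
        have h2 := congrArg Prod.snd h
        simp at h1 h2
        simp only [cellContent]; omega
      · exfalso
        apply hPA
        have hPle : P ≤ (Q.1, Q.2 - 1) := by
          rw [Prod.le_def]
          exact ⟨hPQ.1, by omega⟩
        exact_mod_cast hA0 hPle h
    · have h2 : P.2 = Q.2 := le_antisymm hPQ.2 (not_lt.mp hc)
      have h1 : P.1 < Q.1 := by
        rcases lt_or_eq_of_le hPQ.1 with h | h
        · exact h
        · exact absurd (Prod.ext h h2) hPne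
      have hle : (Q.1 - 1, Q.2) ≤ Q := by
        rw [Prod.le_def]; exact ⟨Nat.sub_le _ _, le_refl _⟩
      have hq : (Q.1 - 1, Q.2) ∈ (↑(insert Q (insert P A)) : Set (ℕ × ℕ)) :=
        hB hle (by simp : Q ∈ (↑(insert Q (insert P A)) : Set (ℕ × ℕ)))
      simp only [Finset.coe_insert, Set.mem_insert_iff, Finset.mem_coe] at hq
      rcases hq with h | h | h
      · exfalso
        have := congrArg Prod.fst h
        simp at this; omega
      · have ha1 := congrArg Prod.fst h
        have ha2 := congrArg Prod.snd h
        simp at ha1 ha2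
        simp only [cellContent]; omega
      · exfalso
        apply hPA
        have hPle : P ≤ (Q.1 - 1, Q.2) := by
          rw [Prod.le_def]
          exact ⟨by omega, le_of_eq h2⟩
        exact_mod_cast hA0 hPle h

/-- Swapping the entries `i` and `i+1` of a standard Young tableau yields a standard
Young tableau iff `|d_i(m)| ≠ 1`. -/
theorem swap_isSYT_iff (n : ℕ) (m : SYT n) (i : ℕ) (h0 : 0 < i) (hn : i < n) :
    IsSYTFun n (m.pos ∘ Equiv.swap
        (⟨i - 1, Nat.lt_of_le_of_lt (Nat.sub_le i 1) hn⟩ : Fin n) ⟨i, hn⟩)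
      ↔ |m.d i| ≠ 1 := by
  classical
  obtain ⟨hinj, hY⟩ := m.isSYT
  set a : Fin n := ⟨i - 1, Nat.lt_of_le_of_lt (Nat.sub_le i 1) hn⟩ with ha
  set b : Fin n := ⟨i, hn⟩ with hb
  have haval : a.val = i - 1 := rfl
  have hbval : b.val = i := rfl
  have hab : a < b := by rw [Fin.lt_def, haval, hbval]; omega
  set P := m.pos a with hPdef
  set Q := m.pos b with hQdef
  set Am := (Finset.univ.filter (fun j => j < a)).image m.pos with hAm
  have hd : m.d i = cellContent Q - cellContent P := by
    rw [SYT.d, dif_pos ⟨h0, hn⟩]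
  have hfa : (Finset.univ.filter (fun j => j ≤ a)) =
      insert a (Finset.univ.filter (fun j => j < a)) := by
    ext j
    simp [le_iff_eq_or_lt]
  have hfb : (Finset.univ.filter (fun j => j ≤ b)) =
      insert b (Finset.univ.filter (fun j => j ≤ a)) := by
    ext j
    simp only [Finset.mem_filter, Finset.mem_univ, true_and, Finset.mem_insert,
      Fin.le_def, Fin.ext_iff, haval, hbval]
    omega
  have hAimg : (Finset.univ.filter (fun j => j ≤ a)).image m.pos = insert P Am := by
    rw [hfa, Finset.image_insert]
  have hBimg : (Finset.univ.filter (fun j => j ≤ b)).image m.pos =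
      insert Q (insert P Am) := by
    rw [hfb, Finset.image_insert, hAimg]
  have hTimg : (Finset.univ.filter (fun j => j ≤ a)).image (m.pos ∘ Equiv.swap a b) =
      insert Q Am := by
    rw [hfa, Finset.image_insert]
    have h1 : (m.pos ∘ Equiv.swap a b) a = Q := by
      simp [Function.comp, Equiv.swap_apply_left, hQdef]
    rw [h1]
    congr 1
    apply Finset.image_congr
    intro j hj
    simp only [Finset.coe_filter, Finset.mem_univ, true_and, Set.mem_setOf_eq] at hj
    have hja : j ≠ a := ne_of_lt hj
    have hjb : j ≠ b := ne_of_lt (lt_trans hj hab)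
    simp [Function.comp, Equiv.swap_apply_of_ne_of_ne hja hjb]
  -- lower set facts
  have hAlow : IsLowerSet (↑(insert P Am) : Set (ℕ × ℕ)) := by
    obtain ⟨Y, hYc⟩ := hY a
    have := Y.isLowerSet
    rw [hYc, hAimg] at this
    exact this
  have hBlow : IsLowerSet (↑(insert Q (insert P Am)) : Set (ℕ × ℕ)) := by
    obtain ⟨Y, hYc⟩ := hY b
    have := Y.isLowerSet
    rw [hYc, hBimg] at this
    exact this
  have hA0 : IsLowerSet (↑Am : Set (ℕ × ℕ)) := by
    by_cases h1 : i = 1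
    · have he : (Finset.univ.filter (fun j => j < a)) = (∅ : Finset (Fin n)) := by
        ext j
        simp [Fin.lt_def, haval, h1]
      rw [hAm, he]
      simp only [Finset.image_empty, Finset.coe_empty]
      exact isLowerSet_empty
    · have h2 : 2 ≤ i := by omega
      obtain ⟨Y, hYc⟩ := hY ⟨i - 2, by omega⟩
      have hfe : (Finset.univ.filter (fun j => j < a)) =
          (Finset.univ.filter (fun j => j ≤ (⟨i - 2, by omega⟩ : Fin n))) := by
        ext j
        simp only [Finset.mem_filter, Finset.mem_univ, true_and, Fin.lt_def,
          Fin.le_def, haval]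
        omega
      have := Y.isLowerSet
      rw [hYc] at this
      rw [hAm, hfe]
      exact this
  have hPA : P ∉ Am := by
    rw [hAm]
    simp only [Finset.mem_image, Finset.mem_filter, Finset.mem_univ, true_and]
    rintro ⟨j, hj, hje⟩
    exact absurd (hinj hje) (ne_of_lt hj)
  have hQB : Q ∉ insert P Am := by
    rw [← hAimg]
    simp only [Finset.mem_image, Finset.mem_filter, Finset.mem_univ, true_and]
    rintro ⟨j, hj, hje⟩
    rw [hinj hje] at hj
    exact absurd hab (not_lt.mpr hj)
  rw [hd]
  constructor
  · rintro ⟨-, hY'⟩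
    obtain ⟨Y, hYc⟩ := hY' a
    have := Y.isLowerSet
    rw [hYc, hTimg] at this
    exact (key_lower Am P Q hA0 hAlow hBlow hPA hQB).mp this
  · intro hdne
    refine ⟨hinj.comp (Equiv.swap a b).injective, fun k => ?_⟩
    by_cases hk : k = a
    · subst hk
      rw [hTimg]
      exact ⟨⟨insert Q Am, (key_lower Am P Q hA0 hAlow hBlow hPA hQB).mpr hdne⟩, rfl⟩
    · have himg : (Finset.univ.filter (fun j => j ≤ k)).image (m.pos ∘ Equiv.swap a b) =
          (Finset.univ.filter (fun j => j ≤ k)).image m.pos := by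
        have hcase : k < a ∨ b ≤ k := by
          rw [Fin.lt_def, Fin.le_def, haval, hbval]
          have hkv : k.val ≠ i - 1 := fun h => hk (Fin.ext h)
          omega
        rcases hcase with hk' | hk'
        · apply Finset.image_congr
          intro j hj
          simp only [Finset.coe_filter, Finset.mem_univ, true_and, Set.mem_setOf_eq] at hj
          have hja : j ≠ a := ne_of_lt (lt_of_le_of_lt hj hk')
          have hjb : j ≠ b := ne_of_lt (lt_trans (lt_of_le_of_lt hj hk') hab)
          simp [Function.comp, Equiv.swap_apply_of_ne_of_ne hja hjb]
        · rw [← Finset.image_image]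
          congr 1
          ext x
          simp only [Finset.mem_image, Finset.mem_filter, Finset.mem_univ, true_and]
          have hswap_le : ∀ j : Fin n, j ≤ k → Equiv.swap a b j ≤ k := by
            intro j hj
            by_cases hja : j = a
            · rw [hja, Equiv.swap_apply_left]; exact hk'
            by_cases hjb : j = b
            · rw [hjb, Equiv.swap_apply_right]; exact le_trans (le_of_lt hab) hk'
            · rw [Equiv.swap_apply_of_ne_of_ne hja hjb]; exact hj
          constructor
          · rintro ⟨j, hj, rfl⟩
            exact hswap_le j hj
          · intro hx
            refine ⟨Equiv.swap a b x, hswap_le x hx, ?_⟩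
            exact Equiv.swap_apply_self a b x
      rw [himg]
      exact hY k
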